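/- Let (S₁,·) and (S₂,·) be countable semigroups and let A ⊆ S₁ and B ⊆ S₂ be C-sets (defined via chains of non-commutative J-sets). Then A × B is a C-set in the product semigroup S₁ × S₂ (with coordinatewise multiplication). -/

import Mathlib

/-- The interleaved product `x(m, a, t, f) = (∏_{j=1}^{m} a(j)·f(t(j))) · a(m+1)`
in a semigroup. -/
def interProd {S : Type*} [Semigroup S] (m : ℕ) (a : Fin (m + 1) → S) (t : Fin m → ℕ)
    (f : ℕ → S) : S :=
  ((List.finRange m).map (fun j => a j.castSucc * f (t j))).foldr (· * ·) (a (Fin.last m))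

/-- A set `A` in a semigroup `S` is a J-set (in the non-commutative sense) if for every
finite nonempty set `F` of sequences in `S` there are `m ≥ 1`, `a ∈ S^{m+1}` and
`t(1) < … < t(m)` in `ℕ` such that `a(1)·f(t(1))·a(2)·f(t(2))⋯a(m)·f(t(m))·a(m+1) ∈ A`
for every `f ∈ F`. -/
def IsJSetNC {S : Type*} [Semigroup S] (A : Set S) : Prop :=
  ∀ F : Finset (ℕ → S), F.Nonempty →
    ∃ m : ℕ, 0 < m ∧ ∃ a : Fin (m + 1) → S, ∃ t : Fin m → ℕ, StrictMono t ∧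
      ∀ f ∈ F, interProd m a t f ∈ A

/-- A set `A` in a countable semigroup `S` is a C-set if there is a decreasing sequence
`⟨C_n⟩` of subsets of `A` such that (1) for each `n` and each `x ∈ C_n` there is `m`
with `C_m ⊆ x⁻¹C_n`, and (2) each `C_n` is a J-set (in the non-commutative sense). -/
def IsCSetNC {S : Type*} [Semigroup S] (A : Set S) : Prop :=
  ∃ C : ℕ → Set S, (∀ n, C n ⊆ A) ∧ (∀ n, C (n + 1) ⊆ C n) ∧
    (∀ n, ∀ x ∈ C n, ∃ m, C m ⊆ {s : S | x * s ∈ C n}) ∧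
    (∀ n, IsJSetNC (C n))

namespace CSetAux

variable {S : Type*} [Semigroup S]

/-- interleaved product determined by a list of (separator, time) pairs and a tail. -/
def LI (w : List (S × ℕ)) (z : S) (f : ℕ → S) : S :=
  (w.map fun p => p.1 * f p.2).foldr (· * ·) z

@[simp] lemma LI_nil (z : S) (f : ℕ → S) : LI [] z f = z := rfl

@[simp] lemma LI_cons (p : S × ℕ) (w : List (S × ℕ)) (z : S) (f : ℕ → S) :
    LI (p :: w) z f = p.1 * f p.2 * LI w z f := rfl

lemma LI_append (w₁ w₂ : List (S × ℕ)) (z : S) (f : ℕ → S) :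
    LI (w₁ ++ w₂) z f = LI w₁ (LI w₂ z f) f := by
  simp [LI, List.foldr_append]

lemma LI_mul (w : List (S × ℕ)) (z y : S) (f : ℕ → S) :
    LI w (z * y) f = LI w z f * y := by
  induction w with
  | nil => rfl
  | cons p w ih => simp [ih, mul_assoc]

lemma interProd_eq_LI (m : ℕ) (a : Fin (m + 1) → S) (t : Fin m → ℕ) (f : ℕ → S) :
    interProd m a t f = LI (List.ofFn fun j : Fin m => (a j.castSucc, t j)) (a (Fin.last m)) f := by
  simp [interProd, LI, List.ofFn_eq_map, List.foldr_map]

lemma interProd_of_list (w : List (S × ℕ)) (z : S) (f : ℕ → S) :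
    interProd w.length
      (fun i => if h : (i : ℕ) < w.length then (w.get ⟨i, h⟩).1 else z)
      (fun j => (w.get j).2) f = LI w z f := by
  rw [interProd_eq_LI]
  have h1 : (List.ofFn fun j : Fin w.length =>
      ((if h : ((j.castSucc : Fin (w.length+1)) : ℕ) < w.length then (w.get ⟨j.castSucc, h⟩).1 else z),
        (w.get j).2)) = w := by
    apply List.ext_getElem
    · simp
    · intro i h₁ h₂
      simp only [List.getElem_ofFn]
      have hi : i < w.length := h₂
      simp only [Fin.coe_castSucc, hi, dif_pos]
      rfl
  have h2 : (if h : ((Fin.last w.length : Fin (w.length+1)) : ℕ) < w.length then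
      (w.get ⟨Fin.last w.length, h⟩).1 else z) = z := by
    simp
  rw [show (fun j : Fin w.length =>
      ((fun i : Fin (w.length+1) => if h : (i:ℕ) < w.length then (w.get ⟨i, h⟩).1 else z) j.castSucc,
        (w.get j).2)) = fun j : Fin w.length =>
      ((if h : ((j.castSucc : Fin (w.length+1)) : ℕ) < w.length then (w.get ⟨j.castSucc, h⟩).1 else z),
        (w.get j).2) from rfl, h1, h2]

lemma LI_fst {S₂ : Type*} [Semigroup S₂] (w : List ((S × S₂) × ℕ)) (z : S × S₂) (f : ℕ → S × S₂) :
    (LI w z f).1 = LI (w.map fun p => (p.1.1, p.2)) z.1 (fun k => (f k).1) := by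
  induction w with
  | nil => rfl
  | cons p w ih => simp [ih]

lemma LI_snd {S₂ : Type*} [Semigroup S₂] (w : List ((S × S₂) × ℕ)) (z : S × S₂) (f : ℕ → S × S₂) :
    (LI w z f).2 = LI (w.map fun p => (p.1.2, p.2)) z.2 (fun k => (f k).2) := by
  induction w with
  | nil => rfl
  | cons p w ih => simp [ih]



/-- A "block": a J-set style witness datum in `S`. -/
structure Blk (S : Type*) where
  r : ℕ
  hr : 0 < r
  b : Fin (r + 1) → S
  t : Fin r → ℕ
  ht : StrictMono t

namespace Blk

variable {S₂ : Type*} [Semigroup S₂]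

def z (B : Blk S₂) : S₂ := B.b (Fin.last B.r)

def times (B : Blk S₂) : List ℕ := List.ofFn B.t

def val (B : Blk S₂) (f : ℕ → S₂) : S₂ := interProd B.r B.b B.t f

def bents (B : Blk S₂) : List (S₂ × ℕ) := List.ofFn fun i => (B.b i.castSucc, B.t i)

lemma val_eq_LI (B : Blk S₂) (f : ℕ → S₂) : B.val f = LI B.bents B.z f :=
  interProd_eq_LI _ _ _ _

end Blk

/-- Value of a nonempty increasing selection of blocks (left-assoc-free foldr form). -/
def SelVal {S₂ : Type*} [Semigroup S₂] : Blk S₂ → List (Blk S₂) → (ℕ → S₂) → S₂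
  | B, [], f => B.val f
  | B, B' :: l, f => B.val f * SelVal B' l f

lemma SelVal_append_singleton {S₂ : Type*} [Semigroup S₂] (B : Blk S₂) (l : List (Blk S₂))
    (B' : Blk S₂) (f : ℕ → S₂) :
    SelVal B (l ++ [B']) f = SelVal B l f * B'.val f := by
  induction l generalizing B with
  | nil => rfl
  | cons h t ih =>
    show B.val f * SelVal h (t ++ [B']) f = _
    rw [ih, SelVal, mul_assoc]

def timesOf {S₂ : Type*} [Semigroup S₂] (L : List (Blk S₂)) : List ℕ :=
  L.foldr (fun B acc => B.times ++ acc) []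

@[simp] lemma timesOf_nil {S₂ : Type*} [Semigroup S₂] : timesOf ([] : List (Blk S₂)) = [] := rfl

@[simp] lemma timesOf_cons {S₂ : Type*} [Semigroup S₂] (B : Blk S₂) (L : List (Blk S₂)) :
    timesOf (B :: L) = B.times ++ timesOf L := rfl

lemma timesOf_sublist {S₂ : Type*} [Semigroup S₂] {L₁ L₂ : List (Blk S₂)}
    (h : L₁.Sublist L₂) : (timesOf L₁).Sublist (timesOf L₂) := by
  induction h with
  | slnil => exact List.Sublist.refl _
  | cons B h ih => exact ih.trans (List.sublist_append_right _ _)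
  | cons_cons B h ih =>
    simp only [timesOf_cons]
    exact (List.append_sublist_append_left B.times).2 ih

section Build

variable {S₁ S₂ : Type*} [Semigroup S₁] [Semigroup S₂]

/-- entries of one block within the combined witness; `h₁, h₂` are the head separators. -/
def benl (x₁ : S₁) (h₁ : S₁) (h₂ : S₂) (B : Blk S₂) : List ((S₁ × S₂) × ℕ) :=
  List.ofFn fun i : Fin B.r =>
    ((if (i : ℕ) = 0 then h₁ else x₁, if (i : ℕ) = 0 then h₂ else B.b i.castSucc), B.t i)

def benl₁ (x₁ : S₁) (h₁ : S₁) (B : Blk S₂) : List (S₁ × ℕ) :=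
  List.ofFn fun i : Fin B.r => (if (i : ℕ) = 0 then h₁ else x₁, B.t i)

def benl₂ (h₂ : S₂) (B : Blk S₂) : List (S₂ × ℕ) :=
  List.ofFn fun i : Fin B.r => (if (i : ℕ) = 0 then h₂ else B.b i.castSucc, B.t i)

def build (x₁ : S₁) : S₂ → List (S₁ × Blk S₂) → List ((S₁ × S₂) × ℕ)
  | _, [] => []
  | z, (aj, B) :: P => benl x₁ (x₁ * aj * x₁) (z * B.b 0) B ++ build x₁ B.z P

def build₁ (x₁ : S₁) : List (S₁ × Blk S₂) → List (S₁ × ℕ)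
  | [] => []
  | (aj, B) :: P => benl₁ x₁ (x₁ * aj * x₁) B ++ build₁ x₁ P

def build₂ : S₂ → List (S₁ × Blk S₂) → List (S₂ × ℕ)
  | _, [] => []
  | z, (aj, B) :: P => benl₂ (z * B.b 0) B ++ build₂ B.z P

/-- the last trailing separator of a chain of blocks -/
def zl : S₂ → List (S₁ × Blk S₂) → S₂
  | z, [] => z
  | _, q :: P => zl q.2.z P

lemma benl_fst (x₁ h₁ : S₁) (h₂ : S₂) (B : Blk S₂) :
    (benl x₁ h₁ h₂ B).map (fun p => (p.1.1, p.2)) = benl₁ x₁ h₁ B := by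
  simp only [benl, benl₁, List.map_ofFn]
  rfl

lemma benl_snd (x₁ h₁ : S₁) (h₂ : S₂) (B : Blk S₂) :
    (benl x₁ h₁ h₂ B).map (fun p => (p.1.2, p.2)) = benl₂ h₂ B := by
  simp only [benl, benl₂, List.map_ofFn]
  rfl

lemma build_fst (x₁ : S₁) (z : S₂) (P : List (S₁ × Blk S₂)) :
    (build x₁ z P).map (fun p => (p.1.1, p.2)) = build₁ x₁ P := by
  induction P generalizing z with
  | nil => rfl
  | cons q P ih => simp [build, build₁, benl_fst, ih]

lemma build_snd (x₁ : S₁) (z : S₂) (P : List (S₁ × Blk S₂)) :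
    (build x₁ z P).map (fun p => (p.1.2, p.2)) = build₂ z P := by
  induction P generalizing z with
  | nil => rfl
  | cons q P ih => simp [build, build₂, benl_snd, ih]

lemma benl_times (x₁ h₁ : S₁) (h₂ : S₂) (B : Blk S₂) :
    (benl x₁ h₁ h₂ B).map Prod.snd = B.times := by
  simp only [benl, Blk.times, List.map_ofFn]
  rfl

lemma build_times (x₁ : S₁) (z : S₂) (P : List (S₁ × Blk S₂)) :
    (build x₁ z P).map Prod.snd = timesOf (P.map Prod.snd) := by
  induction P generalizing z with
  | nil => rfl
  | cons q P ih => simp [build, benl_times, ih]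

lemma benl_ne_nil (x₁ h₁ : S₁) (h₂ : S₂) (B : Blk S₂) : benl x₁ h₁ h₂ B ≠ [] := by
  simp only [benl, ne_eq, List.ofFn_eq_nil_iff]
  have := B.hr
  omega

def gblk (x₁ : S₁) (B : Blk S₂) (f : ℕ → S₁) : S₁ :=
  LI (List.ofFn fun i : Fin B.r => (x₁, B.t i)) x₁ f

lemma benl₁_const (x₁ : S₁) (B : Blk S₂) :
    benl₁ x₁ x₁ B = List.ofFn fun i : Fin B.r => (x₁, B.t i) := by
  simp [benl₁]

lemma LI_benl₁_mul (x₁ q h₁ : S₁) (B : Blk S₂) (X : S₁) (f : ℕ → S₁) :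
    LI (benl₁ x₁ (q * h₁) B) X f = q * LI (benl₁ x₁ h₁ B) X f := by
  obtain ⟨r, hr, b, t, ht⟩ := B
  obtain ⟨r', rfl⟩ : ∃ r', r = r' + 1 := ⟨r - 1, by omega⟩
  simp only [benl₁, List.ofFn_succ, Fin.val_zero, Fin.val_succ, if_pos, Nat.succ_ne_zero,
    if_neg, LI_cons, reduceIte]
  simp [mul_assoc]

lemma LI_benl₁_head (x₁ q : S₁) (B : Blk S₂) (R : S₁) (f : ℕ → S₁) :
    LI (benl₁ x₁ (q * x₁) B) (x₁ * R) f = q * (gblk x₁ B f * R) := by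
  rw [LI_benl₁_mul, benl₁_const, LI_mul]
  rfl

lemma LI_build₁ (x₁ : S₁) (P : List (S₁ × Blk S₂)) (R : S₁) (f : ℕ → S₁) :
    LI (build₁ x₁ P) (x₁ * R) f
      = x₁ * P.foldr (fun q acc => q.1 * gblk x₁ q.2 f * acc) R := by
  induction P generalizing R with
  | nil => simp [build₁]
  | cons q P ih =>
    obtain ⟨aj, B⟩ := q
    rw [show build₁ x₁ ((aj, B) :: P) = benl₁ x₁ (x₁ * aj * x₁) B ++ build₁ x₁ P from rfl,
      LI_append, ih, LI_benl₁_head]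
    simp [mul_assoc]

lemma LI_W₁ (x₁ a0 : S₁) (B₀ : Blk S₂) (P : List (S₁ × Blk S₂)) (R : S₁) (f : ℕ → S₁) :
    LI (benl₁ x₁ (a0 * x₁) B₀ ++ build₁ x₁ P) (x₁ * R) f
      = ((a0, B₀) :: P).foldr (fun q acc => q.1 * gblk x₁ q.2 f * acc) R := by
  rw [LI_append, LI_build₁, LI_benl₁_head]
  simp [mul_assoc]

lemma benl₂_b0 (B : Blk S₂) : benl₂ (B.b 0) B = B.bents := by
  simp only [benl₂, Blk.bents]
  apply congrArg List.ofFn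
  funext i
  by_cases h : (i : ℕ) = 0
  · have : i.castSucc = 0 := by
      apply Fin.ext
      simpa using h
    simp [h, this]
  · simp [h]

lemma LI_benl₂_mul (z h₂ : S₂) (B : Blk S₂) (X : S₂) (f : ℕ → S₂) :
    LI (benl₂ (z * h₂) B) X f = z * LI (benl₂ h₂ B) X f := by
  obtain ⟨r, hr, b, t, ht⟩ := B
  obtain ⟨r', rfl⟩ : ∃ r', r = r' + 1 := ⟨r - 1, by omega⟩
  simp only [benl₂, List.ofFn_succ, Fin.val_zero, Fin.val_succ, Nat.succ_ne_zero,
    LI_cons, reduceIte]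
  simp [mul_assoc]

lemma LI_build₂ (q : S₁ × Blk S₂) (P : List (S₁ × Blk S₂)) (z : S₂) (f : ℕ → S₂) :
    LI (build₂ z (q :: P)) (zl q.2.z P) f = z * SelVal q.2 (P.map Prod.snd) f := by
  induction P generalizing q z with
  | nil =>
    obtain ⟨aj, B⟩ := q
    show LI (benl₂ (z * B.b 0) B ++ []) B.z f = z * SelVal B [] f
    rw [List.append_nil, LI_benl₂_mul, benl₂_b0, ← Blk.val_eq_LI]
    rfl
  | cons q' P ih =>
    obtain ⟨aj, B⟩ := q
    show LI (benl₂ (z * B.b 0) B ++ build₂ B.z (q' :: P)) (zl q'.2.z P) f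
      = z * SelVal B ((q' :: P).map Prod.snd) f
    rw [LI_append, ih q' B.z, LI_benl₂_mul, benl₂_b0, LI_mul, ← Blk.val_eq_LI]
    rfl

lemma LI_W₂ (B₀ : Blk S₂) (P : List (S₁ × Blk S₂)) (f : ℕ → S₂) :
    LI (benl₂ (B₀.b 0) B₀ ++ build₂ B₀.z P) (zl B₀.z P) f
      = SelVal B₀ (P.map Prod.snd) f := by
  cases P with
  | nil =>
    show LI (benl₂ (B₀.b 0) B₀ ++ []) B₀.z f = _
    rw [List.append_nil, benl₂_b0, ← Blk.val_eq_LI]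
    rfl
  | cons q P =>
    show LI (benl₂ (B₀.b 0) B₀ ++ build₂ B₀.z (q :: P)) (zl q.2.z P) f = _
    rw [LI_append, LI_build₂ q P B₀.z, benl₂_b0, LI_mul, ← Blk.val_eq_LI]
    rfl

end Build

lemma chain_anti {α : Type*} {C : ℕ → Set α} (h : ∀ n, C (n + 1) ⊆ C n) :
    ∀ {m n : ℕ}, n ≤ m → C m ⊆ C n := by
  intro m n hnm
  induction hnm with
  | refl => exact fun _ hx => hx
  | step _ ih => exact fun x hx => ih (h _ hx)

lemma le_foldr_max (l : List ℕ) : ∀ τ ∈ l, τ ≤ l.foldr max 0 := by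
  induction l with
  | nil => simp
  | cons x l ih =>
    intro τ hτ
    rcases List.mem_cons.1 hτ with rfl | h
    · exact le_max_left _ _
    · exact le_trans (ih τ h) (le_max_right _ _)

lemma pairwise_ofFn_lt {n : ℕ} {t : Fin n → ℕ} (ht : StrictMono t) :
    (List.ofFn t).Pairwise (· < ·) := by
  rw [List.pairwise_iff_getElem]
  intro i j hi hj hij
  simp only [List.getElem_ofFn]
  exact ht (by simpa using hij)

lemma sorted_sublist_range : ∀ (K : ℕ) (l : List ℕ), l.Pairwise (· < ·) →
    (∀ x ∈ l, x < K) → l.Sublist (List.range K) := by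
  intro K
  induction K with
  | zero =>
    intro l _ hb
    cases l with
    | nil => simp
    | cons x l => exact absurd (hb x (by simp)) (by omega)
  | succ K ih =>
    intro l hp hb
    by_cases hK : ∀ x ∈ l, x < K
    · exact (ih l hp hK).trans (by rw [List.range_succ]; exact List.sublist_append_left _ _)
    · push_neg at hK
      obtain ⟨y, hy, hyK⟩ := hK
      have hyK' : y = K := le_antisymm (by have := hb y hy; omega) hyK
      have hy : K ∈ l := hyK' ▸ hy
      have hne : l ≠ [] := by rintro rfl; simp at hy
      -- K is the last element of l
      have hlast : l.getLast hne = K := by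
        by_contra hlK
        -- l = dropLast ++ [last], K ∈ dropLast, pairwise gives K < last
        have hdec := List.dropLast_append_getLast hne
        have hKd : K ∈ l.dropLast := by
          have := hy
          rw [← hdec] at this
          rcases List.mem_append.1 this with h | h
          · exact h
          · simp at h; exact absurd h.symm hlK
        have hp' := hp
        rw [← hdec] at hp'
        have := (List.pairwise_append.1 hp').2.2 K hKd (l.getLast hne) (by simp)
        have hlt := hb (l.getLast hne) (List.getLast_mem hne)
        omega
      have hdec := List.dropLast_append_getLast hne
      have hp' := hp
      rw [← hdec, List.pairwise_append] at hp'
      have hdb : ∀ x ∈ l.dropLast, x < K := by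
        intro x hx
        have := hp'.2.2 x hx (l.getLast hne) (by simp)
        omega
      have hsub : l.dropLast.Sublist (List.range K) := ih _ hp'.1 hdb
      have h2 : (l.dropLast ++ [l.getLast hne]).Sublist (List.range (K + 1)) := by
        rw [List.range_succ, hlast]
        exact hsub.append (List.Sublist.refl _)
      rw [hdec] at h2
      exact h2

lemma exists_level {S : Type*} [Semigroup S] (D : ℕ → Set S) (hdec : ∀ k, D (k + 1) ⊆ D k) (n : ℕ)
    (hsh : ∀ x ∈ D n, ∃ m, D m ⊆ {s : S | x * s ∈ D n}) :
    ∀ (xs : List S), (∀ x ∈ xs, x ∈ D n) →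
      ∃ N, n ≤ N ∧ ∀ x ∈ xs, ∀ s ∈ D N, x * s ∈ D n := by
  intro xs
  induction xs with
  | nil => exact fun _ => ⟨n, le_refl n, by simp⟩
  | cons x l ih =>
    intro hmem
    obtain ⟨N, hnN, hN⟩ := ih (fun y hy => hmem y (by simp [hy]))
    obtain ⟨M, hM⟩ := hsh x (hmem x (by simp))
    refine ⟨max N M, le_trans hnN (le_max_left _ _), ?_⟩
    intro y hy s hs
    rcases List.mem_cons.1 hy with rfl | hyl
    · exact hM (chain_anti hdec (le_max_right N M) hs)
    · exact hN y hyl s (chain_anti hdec (le_max_left N M) hs)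


section Blocks

variable {S₂ : Type*} [Semigroup S₂]

lemma timesOf_append (L₁ L₂ : List (Blk S₂)) :
    timesOf (L₁ ++ L₂) = timesOf L₁ ++ timesOf L₂ := by
  induction L₁ with
  | nil => rfl
  | cons B L ih => simp [ih]

variable (D : ℕ → Set S₂) (n : ℕ) (F₂ : Finset (ℕ → S₂))

/-- invariant for the inductive block construction -/
def Good (L : List (Blk S₂)) : Prop :=
  (timesOf L).Pairwise (· < ·) ∧
    ∀ f ∈ F₂, ∀ (B : Blk S₂) (sel : List (Blk S₂)), (B :: sel).Sublist L →
      SelVal B sel f ∈ D n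

lemma good_nil : Good D n F₂ [] := by
  constructor
  · simp [timesOf]
  · intro f _ B sel h
    exact absurd (List.eq_nil_of_sublist_nil h) (by simp)

lemma good_step (hdec : ∀ k, D (k + 1) ⊆ D k)
    (hsh : ∀ x ∈ D n, ∃ m, D m ⊆ {s : S₂ | x * s ∈ D n})
    (hJ : ∀ k, IsJSetNC (D k)) (hF₂ : F₂.Nonempty)
    (L : List (Blk S₂)) (hL : Good D n F₂ L) : ∃ B : Blk S₂, Good D n F₂ (L ++ [B]) := by
  classical
  set h : ℕ := (timesOf L).foldr max 0 + 1 with hh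
  have hbound : ∀ τ ∈ timesOf L, τ < h := fun τ hτ => by
    have := le_foldr_max (timesOf L) τ hτ; omega
  -- all selection values so far
  set xs : List S₂ := F₂.toList.flatMap (fun f =>
    L.sublists.filterMap (fun sel => match sel with
      | [] => none
      | B :: s => some (SelVal B s f))) with hxs
  have hxsmem : ∀ x ∈ xs, x ∈ D n := by
    intro x hx
    rw [hxs, List.mem_flatMap] at hx
    obtain ⟨f, hf, hx⟩ := hx
    rw [List.mem_filterMap] at hx
    obtain ⟨sel, hsel, hmatch⟩ := hx
    match sel, hmatch with
    | B :: s, hmatch =>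
      have : SelVal B s f = x := by simpa using hmatch
      exact this ▸ hL.2 f (Finset.mem_toList.1 hf) B s (List.mem_sublists.1 hsel)
  have hxsof : ∀ f ∈ F₂, ∀ (B : Blk S₂) (sel : List (Blk S₂)), (B :: sel).Sublist L →
      SelVal B sel f ∈ xs := by
    intro f hf B sel hsub
    rw [hxs, List.mem_flatMap]
    refine ⟨f, Finset.mem_toList.2 hf, ?_⟩
    rw [List.mem_filterMap]
    exact ⟨B :: sel, List.mem_sublists.2 hsub, rfl⟩
  obtain ⟨N, hnN, hN⟩ := exists_level D hdec n hsh xs hxsmem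
  -- apply the J-set property of `D N` to the shifted family
  obtain ⟨r, hr, b, s, hs, hmem⟩ :=
    hJ N (F₂.image (fun f => fun k => f (h + k))) (hF₂.image _)
  set Bn : Blk S₂ := ⟨r, hr, b, fun i => h + s i, fun i j hij =>
    Nat.add_lt_add_left (hs hij) h⟩ with hBn
  refine ⟨Bn, ?_, ?_⟩
  · -- times pairwise
    rw [timesOf_append, List.pairwise_append]
    refine ⟨hL.1, ?_, ?_⟩
    · simp only [timesOf_cons, timesOf_nil, List.append_nil, Blk.times]
      exact pairwise_ofFn_lt (fun i j hij => Nat.add_lt_add_left (hs hij) h)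
    · intro τ hτ τ' hτ'
      simp only [timesOf_cons, timesOf_nil, List.append_nil, Blk.times, List.mem_ofFn] at hτ'
      obtain ⟨i, rfl⟩ := hτ'
      have := hbound τ hτ
      show τ < h + s i
      omega
  · -- selection property
    intro f hf B sel hsub
    have hval : ∀ g ∈ F₂, Blk.val Bn g ∈ D N := by
      intro g hg
      have : (fun k => g (h + k)) ∈ F₂.image (fun f => fun k => f (h + k)) :=
        Finset.mem_image_of_mem _ hg
      exact hmem _ this
    rw [List.sublist_append_iff] at hsub
    obtain ⟨l₁, l₂, heq, hsub₁, hsub₂⟩ := hsub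
    rcases List.sublist_singleton.1 hsub₂ with rfl | rfl
    · rw [List.append_nil] at heq
      exact hL.2 f hf B sel (heq ▸ hsub₁)
    · cases l₁ with
      | nil =>
        simp only [List.nil_append, List.cons.injEq] at heq
        obtain ⟨rfl, rfl⟩ := heq
        exact chain_anti hdec hnN (hval f hf)
      | cons B₁ l₁' =>
        rw [List.cons_append] at heq
        obtain ⟨rfl, hsel⟩ : B = B₁ ∧ sel = l₁' ++ [Bn] := by
          injection heq with h1 h2
          exact ⟨h1, h2⟩
        rw [hsel, SelVal_append_singleton]
        exact hN _ (hxsof f hf B l₁' hsub₁) _ (hval f hf)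

lemma exists_blockseq (hdec : ∀ k, D (k + 1) ⊆ D k)
    (hsh : ∀ x ∈ D n, ∃ m, D m ⊆ {s : S₂ | x * s ∈ D n})
    (hJ : ∀ k, IsJSetNC (D k)) (hF₂ : F₂.Nonempty) :
    ∃ blk : ℕ → Blk S₂, ∀ K : ℕ, Good D n F₂ ((List.range K).map blk) := by
  classical
  let next : {L : List (Blk S₂) // Good D n F₂ L} → {L : List (Blk S₂) // Good D n F₂ L} :=
    fun L => ⟨L.1 ++ [(good_step D n F₂ hdec hsh hJ hF₂ L.1 L.2).choose],
      (good_step D n F₂ hdec hsh hJ hF₂ L.1 L.2).choose_spec⟩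
  let H : ℕ → {L : List (Blk S₂) // Good D n F₂ L} := fun k => next^[k] ⟨[], good_nil D n F₂⟩
  refine ⟨fun k => (good_step D n F₂ hdec hsh hJ hF₂ (H k).1 (H k).2).choose, fun K => ?_⟩
  have key : ∀ K, (H K).1 = (List.range K).map
      (fun k => (good_step D n F₂ hdec hsh hJ hF₂ (H k).1 (H k).2).choose) := by
    intro K
    induction K with
    | zero => rfl
    | succ K ih =>
      have : H (K + 1) = next (H K) := Function.iterate_succ_apply' next K _
      rw [List.range_succ, List.map_append, ← ih, this]
      rfl
  rw [← key]
  exact (H K).2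

end Blocks


section Main

variable {S₁ S₂ : Type*} [Semigroup S₁] [Semigroup S₂]

lemma foldr_ofFn_interProd (x₁ : S₁) (blk : ℕ → Blk S₂) (m : ℕ) (a : Fin (m + 1) → S₁)
    (u : Fin m → ℕ) (f₁ : ℕ → S₁) :
    (List.ofFn fun j : Fin m => (a j.castSucc, blk (u j))).foldr
        (fun q acc => q.1 * gblk x₁ q.2 f₁ * acc) (a (Fin.last m))
      = interProd m a u (fun k => gblk x₁ (blk k) f₁) := by
  simp [interProd, List.ofFn_eq_map, List.foldr_map]

lemma jset_prod (Cn : Set S₁) (hC : IsJSetNC Cn)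
    (D : ℕ → Set S₂) (hdec : ∀ k, D (k + 1) ⊆ D k) (n : ℕ)
    (hsh : ∀ x ∈ D n, ∃ m, D m ⊆ {s : S₂ | x * s ∈ D n})
    (hJ : ∀ k, IsJSetNC (D k)) :
    IsJSetNC (Cn ×ˢ D n) := by
  classical
  intro F hF
  obtain ⟨f₀, hf₀⟩ := hF
  set x₁ : S₁ := (f₀ 0).1 with hx₁
  set F₂ : Finset (ℕ → S₂) := F.image (fun f => fun k => (f k).2) with hF₂def
  have hF₂ : F₂.Nonempty := ⟨_, Finset.mem_image_of_mem _ hf₀⟩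
  obtain ⟨blk, hblk⟩ := exists_blockseq D n F₂ hdec hsh hJ hF₂
  set G : Finset (ℕ → S₁) := F.image (fun f => fun k => gblk x₁ (blk k) (fun i => (f i).1))
    with hGdef
  obtain ⟨m, hm, a, u, hu, hmemG⟩ := hC G ⟨_, Finset.mem_image_of_mem _ hf₀⟩
  obtain ⟨m', rfl⟩ : ∃ m', m = m' + 1 := ⟨m - 1, by omega⟩
  set B₀ : Blk S₂ := blk (u 0) with hB₀
  set a0 : S₁ := a ((0 : Fin (m' + 1)).castSucc) with ha0
  set P : List (S₁ × Blk S₂) :=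
    List.ofFn (fun j : Fin m' => (a j.succ.castSucc, blk (u j.succ))) with hP
  set W : List ((S₁ × S₂) × ℕ) := benl x₁ (a0 * x₁) (B₀.b 0) B₀ ++ build x₁ B₀.z P with hW
  set Z : S₁ × S₂ := (x₁ * a (Fin.last (m' + 1)), zl B₀.z P) with hZ
  -- the combined list of (separator, blockindex) pairs
  have hPfull : (a0, B₀) :: P = List.ofFn (fun j : Fin (m' + 1) => (a j.castSucc, blk (u j))) := by
    rw [List.ofFn_succ]
  have hsel : B₀ :: P.map Prod.snd = (List.ofFn fun j : Fin (m' + 1) => u j).map blk := by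
    rw [List.map_ofFn, List.map_ofFn, List.ofFn_succ]
    rfl
  set K : ℕ := u (Fin.last m') + 1 with hK
  have hselsub : (B₀ :: P.map Prod.snd).Sublist ((List.range K).map blk) := by
    rw [hsel]
    apply List.Sublist.map
    apply sorted_sublist_range
    · exact pairwise_ofFn_lt hu
    · intro x hx
      rw [List.mem_ofFn] at hx
      obtain ⟨j, rfl⟩ := hx
      have : u j ≤ u (Fin.last m') := hu.monotone (Fin.le_last j)
      show u j < K
      omega
  have hWsnd : W.map Prod.snd = timesOf (B₀ :: P.map Prod.snd) := by
    rw [hW, List.map_append, benl_times, build_times, timesOf_cons]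
  have hWpair : (W.map Prod.snd).Pairwise (· < ·) := by
    rw [hWsnd]
    exact ((hblk K).1).sublist (timesOf_sublist hselsub)
  have hWne : W ≠ [] := by
    rw [hW]
    intro hc
    exact benl_ne_nil x₁ (a0 * x₁) (B₀.b 0) B₀ (List.append_eq_nil_iff.1 hc).1
  have hWlen : 0 < W.length := List.length_pos_iff.2 hWne
  refine ⟨W.length, hWlen,
    (fun i => if h : (i : ℕ) < W.length then (W.get ⟨i, h⟩).1 else Z),
    (fun j => (W.get j).2), ?_, ?_⟩
  · -- strict monotonicity of times
    intro i j hij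
    have := List.pairwise_iff_getElem.1 hWpair i j
      (by simpa using i.2) (by simpa using j.2) hij
    simpa [List.getElem_map] using this
  · -- membership
    intro f hf
    rw [interProd_of_list W Z f]
    constructor
    · -- first coordinate
      rw [LI_fst, hW, List.map_append, benl_fst, build_fst, hZ]
      show LI (benl₁ x₁ (a0 * x₁) B₀ ++ build₁ x₁ P) (x₁ * a (Fin.last (m' + 1)))
        (fun k => (f k).1) ∈ Cn
      rw [LI_W₁, hPfull, foldr_ofFn_interProd]
      exact hmemG _ (Finset.mem_image_of_mem _ hf)
    · -- second coordinate
      rw [LI_snd, hW, List.map_append, benl_snd, build_snd, hZ]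
      show LI (benl₂ (B₀.b 0) B₀ ++ build₂ B₀.z P) (zl B₀.z P) (fun k => (f k).2) ∈ D n
      rw [LI_W₂]
      exact (hblk K).2 _ (Finset.mem_image_of_mem _ hf) B₀ (P.map Prod.snd) hselsub

end Main


theorem csetNC_prod' {S₁ S₂ : Type*} [Semigroup S₁] [Semigroup S₂]
    {A : Set S₁} {B : Set S₂} (hA : IsCSetNC A) (hB : IsCSetNC B) :
    IsCSetNC (A ×ˢ B) := by
  obtain ⟨C, hCA, hCdec, hCsh, hCJ⟩ := hA
  obtain ⟨D, hDB, hDdec, hDsh, hDJ⟩ := hB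
  refine ⟨fun n => C n ×ˢ D n, ?_, ?_, ?_, ?_⟩
  · exact fun n => Set.prod_mono (hCA n) (hDB n)
  · exact fun n => Set.prod_mono (hCdec n) (hDdec n)
  · rintro n ⟨y, z⟩ hx
    rw [Set.mem_prod] at hx
    obtain ⟨m₁, hm₁⟩ := hCsh n y hx.1
    obtain ⟨m₂, hm₂⟩ := hDsh n z hx.2
    refine ⟨max m₁ m₂, ?_⟩
    rintro ⟨s, t⟩ hs
    rw [Set.mem_prod] at hs
    constructor
    · exact hm₁ (chain_anti hCdec (le_max_left m₁ m₂) hs.1)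
    · exact hm₂ (chain_anti hDdec (le_max_right m₁ m₂) hs.2)
  · exact fun n => jset_prod (C n) (hCJ n) D hDdec n (hDsh n) hDJ

end CSetAux

theorem csetNC_prod {S₁ S₂ : Type*} [Semigroup S₁] [Semigroup S₂]
    [Countable S₁] [Countable S₂]
    {A : Set S₁} {B : Set S₂} (hA : IsCSetNC A) (hB : IsCSetNC B) :
    IsCSetNC (A ×ˢ B) := by
  exact CSetAux.csetNC_prod' hA hB
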